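/- The one-step update function f associated with a switch graph is non-expansive with respect to the ℓ₁-norm: for all x, y ∈ ℝ^V with nonnegative entries, ‖f(x) - f(y)‖₁ ≤ ‖x - y‖₁. -/
import Mathlib


open Finset

noncomputable def h0 (x : ℝ) : ℝ := min (x - ⌊x / 2⌋) ⌈x / 2⌉
noncomputable def h1 (x : ℝ) : ℝ := max (⌊x / 2⌋ : ℝ) (x - ⌈x / 2⌉)

/-- One-step update of the switch graph `(V, s0, s1)`. -/
noncomputable def oneStep {V : Type*} [Fintype V] [DecidableEq V]
    (s0 s1 : V → V) (x : V → ℝ) : V → ℝ :=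
  fun v => (∑ u : V, if s0 u = v then h0 (x u) else 0)
    + (∑ u : V, if s1 u = v then h1 (x u) else 0)

lemma h0_add_h1 (x : ℝ) : h0 x + h1 x = x := by
  unfold h0 h1
  rcases le_total (x - ⌊x / 2⌋) (⌈x / 2⌉ : ℝ) with h | h
  · rw [min_eq_left h, max_eq_left (by linarith)]; ring
  · rw [min_eq_right h, max_eq_right (by linarith)]; ring

lemma h0_mono : Monotone h0 := by
  intro a b hab
  unfold h0
  have hfa : (⌊a / 2⌋ : ℝ) ≤ a / 2 := Int.floor_le _
  have hfb : (⌊b / 2⌋ : ℝ) ≤ b / 2 := Int.floor_le _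
  have hca : a / 2 ≤ (⌈a / 2⌉ : ℝ) := Int.le_ceil _
  have hf : (⌊a / 2⌋ : ℤ) ≤ ⌊b / 2⌋ := Int.floor_le_floor (by linarith)
  have hc : (⌈a / 2⌉ : ℤ) ≤ ⌈b / 2⌉ := Int.ceil_le_ceil (by linarith)
  refine le_min ?_ ?_
  · rcases eq_or_lt_of_le hf with h | h
    · calc min (a - ⌊a / 2⌋) (⌈a / 2⌉ : ℝ) ≤ a - ⌊a / 2⌋ := min_le_left _ _
        _ ≤ b - ⌊b / 2⌋ := by rw [← h]; linarith
    · have h1 : (⌈a / 2⌉ : ℤ) ≤ ⌊a / 2⌋ + 1 := Int.ceil_le_floor_add_one _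
      have h2 : (⌈a / 2⌉ : ℤ) ≤ ⌊b / 2⌋ := by omega
      calc min (a - ⌊a / 2⌋) (⌈a / 2⌉ : ℝ) ≤ (⌈a / 2⌉ : ℝ) := min_le_right _ _
        _ ≤ (⌊b / 2⌋ : ℝ) := by exact_mod_cast h2
        _ ≤ b - ⌊b / 2⌋ := by linarith
  · calc min (a - ⌊a / 2⌋) (⌈a / 2⌉ : ℝ) ≤ (⌈a / 2⌉ : ℝ) := min_le_right _ _
      _ ≤ (⌈b / 2⌉ : ℝ) := by exact_mod_cast hc

lemma h1_mono : Monotone h1 := by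
  intro a b hab
  unfold h1
  have hca : a / 2 ≤ (⌈a / 2⌉ : ℝ) := Int.le_ceil _
  have hfb : (⌊b / 2⌋ : ℝ) ≤ b / 2 := Int.floor_le _
  have hf : (⌊a / 2⌋ : ℤ) ≤ ⌊b / 2⌋ := Int.floor_le_floor (by linarith)
  have hc : (⌈a / 2⌉ : ℤ) ≤ ⌈b / 2⌉ := Int.ceil_le_ceil (by linarith)
  refine max_le ?_ ?_
  · calc (⌊a / 2⌋ : ℝ) ≤ (⌊b / 2⌋ : ℝ) := by exact_mod_cast hf
      _ ≤ max (⌊b / 2⌋ : ℝ) (b - ⌈b / 2⌉) := le_max_left _ _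
  · rcases eq_or_lt_of_le hc with h | h
    · calc a - ⌈a / 2⌉ ≤ b - (⌈b / 2⌉ : ℝ) := by rw [← h]; linarith
        _ ≤ max (⌊b / 2⌋ : ℝ) (b - ⌈b / 2⌉) := le_max_right _ _
    · have h1' : (⌈b / 2⌉ : ℤ) ≤ ⌊b / 2⌋ + 1 := Int.ceil_le_floor_add_one _
      have h2 : (⌈a / 2⌉ : ℤ) ≤ ⌊b / 2⌋ := by omega
      calc a - (⌈a / 2⌉ : ℝ) ≤ a / 2 := by linarith
        _ ≤ (⌈a / 2⌉ : ℝ) := hca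
        _ ≤ (⌊b / 2⌋ : ℝ) := by exact_mod_cast h2
        _ ≤ max (⌊b / 2⌋ : ℝ) (b - ⌈b / 2⌉) := le_max_left _ _

lemma key (a b : ℝ) : |h0 a - h0 b| + |h1 a - h1 b| ≤ |a - b| := by
  rcases le_total a b with hab | hab
  · rw [abs_of_nonpos (by linarith [h0_mono hab]),
      abs_of_nonpos (by linarith [h1_mono hab]),
      abs_of_nonpos (by linarith)]
    have := h0_add_h1 a; have := h0_add_h1 b
    linarith
  · rw [abs_of_nonneg (by linarith [h0_mono hab]),
      abs_of_nonneg (by linarith [h1_mono hab]),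
      abs_of_nonneg (by linarith)]
    have := h0_add_h1 a; have := h0_add_h1 b
    linarith

theorem oneStep_nonexpansive {V : Type*} [Fintype V] [DecidableEq V]
    (s0 s1 : V → V) (x y : V → ℝ) (hx : ∀ v, 0 ≤ x v) (hy : ∀ v, 0 ≤ y v) :
    ∑ v : V, |oneStep s0 s1 x v - oneStep s0 s1 y v| ≤ ∑ v : V, |x v - y v| := by
  have step1 : ∀ v, |oneStep s0 s1 x v - oneStep s0 s1 y v| ≤
      (∑ u : V, if s0 u = v then |h0 (x u) - h0 (y u)| else 0)
      + (∑ u : V, if s1 u = v then |h1 (x u) - h1 (y u)| else 0) := by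
    intro v
    have e : oneStep s0 s1 x v - oneStep s0 s1 y v =
        (∑ u : V, if s0 u = v then h0 (x u) - h0 (y u) else 0)
        + (∑ u : V, if s1 u = v then h1 (x u) - h1 (y u) else 0) := by
      unfold oneStep
      have : ∀ (f g : V → ℝ) (p : V → Prop) [DecidablePred p],
          ∑ u : V, (if p u then f u - g u else 0) =
          (∑ u : V, if p u then f u else 0) - ∑ u : V, if p u then g u else 0 := by
        intro f g p _
        rw [← Finset.sum_sub_distrib]
        exact Finset.sum_congr rfl fun u _ => by by_cases h : p u <;> simp [h]
      rw [this, this]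
      ring
    rw [e]
    refine (abs_add_le _ _).trans (add_le_add ?_ ?_) <;>
    · refine (Finset.abs_sum_le_sum_abs _ _).trans (le_of_eq ?_)
      refine Finset.sum_congr rfl fun u _ => ?_
      split <;> simp
  calc ∑ v : V, |oneStep s0 s1 x v - oneStep s0 s1 y v|
      ≤ ∑ v : V, ((∑ u : V, if s0 u = v then |h0 (x u) - h0 (y u)| else 0)
        + (∑ u : V, if s1 u = v then |h1 (x u) - h1 (y u)| else 0)) :=
        Finset.sum_le_sum fun v _ => step1 v
    _ = ∑ u : V, (|h0 (x u) - h0 (y u)| + |h1 (x u) - h1 (y u)|) := by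
        have hswap : ∀ (s : V → V) (a : V → ℝ),
            ∑ v : V, ∑ u : V, (if s u = v then a u else 0) = ∑ u : V, a u := by
          intro s a
          rw [Finset.sum_comm]
          refine Finset.sum_congr rfl fun u _ => ?_
          rw [Finset.sum_ite_eq Finset.univ (s u) (fun _ => a u)]
          simp
        rw [Finset.sum_add_distrib, hswap, hswap, ← Finset.sum_add_distrib]
    _ ≤ ∑ u : V, |x u - y u| := Finset.sum_le_sum fun u _ => key (x u) (y u)
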